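/- Compatibility of partitions with strong resets: let A be a game with transitions (q, g, a, R, q') where each reset R is a constant set (R ⊆ V₂ independent of the source point). Let P be any partition of Q × V₂ refining the partition generated by all guards and resets (i.e., each guard g and each reset set R is a union of pieces of P restricted to the relevant location). Then P is stable under Pred_a for every action a: for any union W of pieces of P, Pred_a(W) is a union of pieces of P. -/
import Mathlib

section

variable {Q V2 A : Type*}

/-- Discrete step of an automaton with strong (constant-set) resets: `(q,y) →ᵃ (q',y')`
iff there is a transition `(q, g, a, R, q')` with `y ∈ g` and `y' ∈ R`. -/
def StrongResetStep (trans : Set (Q × Set V2 × A × Set V2 × Q)) (a : A)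
    (s s' : Q × V2) : Prop :=
  ∃ t ∈ trans, t.1 = s.1 ∧ t.2.2.1 = a ∧ s.2 ∈ t.2.1 ∧ s'.2 ∈ t.2.2.2.1 ∧ t.2.2.2.2 = s'.1

/-- `Pred_a(W)`: states where `a` is enabled and every `a`-successor lies in `W`. -/
def PredA (trans : Set (Q × Set V2 × A × Set V2 × Q)) (a : A)
    (W : Set (Q × V2)) : Set (Q × V2) :=
  {s | (∃ s', StrongResetStep trans a s s') ∧
       ∀ s', StrongResetStep trans a s s' → s' ∈ W}

/-- with strong resets, membership in `Pred_a(W)` only depends on which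
guards the point satisfies: if `y₁, y₂` (at the same location `q`) belong to exactly the
same guards of the automaton — as is the case when they lie in the same piece of a
partition refining the partition generated by guards and resets — then
`(q,y₁) ∈ Pred_a(W) ↔ (q,y₂) ∈ Pred_a(W)`, for every `W`.  Hence any such partition is
stable under `Pred_a` for every action `a`. -/
theorem strong_reset_pred_stable
    (trans : Set (Q × Set V2 × A × Set V2 × Q)) (a : A) (W : Set (Q × V2))
    (q : Q) (y₁ y₂ : V2)
    (hguards : ∀ t ∈ trans, (y₁ ∈ t.2.1 ↔ y₂ ∈ t.2.1)) :
    (q, y₁) ∈ PredA trans a W ↔ (q, y₂) ∈ PredA trans a W := by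
  have key : ∀ u v : V2, (∀ t ∈ trans, (u ∈ t.2.1 ↔ v ∈ t.2.1)) →
      (q, u) ∈ PredA trans a W → (q, v) ∈ PredA trans a W := by
    rintro u v h ⟨⟨s', t, ht, h1, h2, h3, h4, h5⟩, hall⟩
    refine ⟨⟨s', t, ht, h1, h2, (h t ht).mp h3, h4, h5⟩, ?_⟩
    rintro s' ⟨t', ht', h1', h2', h3', h4', h5'⟩
    exact hall s' ⟨t', ht', h1', h2', (h t' ht').mpr h3', h4', h5'⟩
  exact ⟨key y₁ y₂ hguards, key y₂ y₁ fun t ht => (hguards t ht).symm⟩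

end
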